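/- Let A be a unital C*-algebra, let q be a real number with |q| > 1, and let x₀, x₁ ∈ A with x₀ = x₀*, x₀² + x₁* x₁ = 1, and q^{−2} x₀² + x₁ x₁* = 1. Then either x₀ = 0, or the spectrum of x₀² equals {0} ∪ {q^{−2k} : k ∈ ℕ}. -/

import Mathlib

open Pointwise


/-- In a unital C*-algebra, if `x₀ = x₀*` and the sphere relations
`x₀² + x₁*x₁ = 1` and `q⁻²x₀² + x₁x₁* = 1` of the quantum sphere `S_q²` hold
with `|q| > 1`, then either `x₀ = 0` or the spectrum of `x₀²` is
`{0} ∪ {q^{−2k} : k ∈ ℕ}`. -/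
theorem spectrum_x0_sq_quantum_two_sphere
    (A : Type*) [NormedRing A] [StarRing A] [CStarRing A] [CompleteSpace A]
    [NormedAlgebra ℂ A] [StarModule ℂ A]
    (q : ℝ) (hq : 1 < |q|) (x0 x1 : A) (hx0 : star x0 = x0)
    (hs1 : x0 ^ 2 + star x1 * x1 = 1)
    (hs2 : ((q : ℂ)⁻¹ ^ 2) • x0 ^ 2 + x1 * star x1 = 1) :
    x0 = 0 ∨
      spectrum ℂ (x0 ^ 2)
        = {0} ∪ Set.range (fun k : ℕ => (q : ℂ) ^ (-(2 * (k : ℤ)))) := by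
  by_cases hx00 : x0 = 0
  · exact Or.inl hx00
  right
  have : Nontrivial A := nontrivial_of_ne x0 0 hx00
  letI : CStarAlgebra A := ⟨⟩
  have hq0 : q ≠ 0 := by
    intro h; rw [h] at hq; simp at hq; linarith
  set c : ℝ := q⁻¹ ^ 2 with hc_def
  have hc0 : 0 < c := by positivity
  have hc1 : c < 1 := by
    rw [hc_def, sq]
    have h1 : |q⁻¹| < 1 := by
      rw [abs_inv]; exact inv_lt_one_of_one_lt₀ hq
    calc q⁻¹ * q⁻¹ ≤ |q⁻¹ * q⁻¹| := le_abs_self _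
    _ = |q⁻¹| * |q⁻¹| := abs_mul _ _
    _ < 1 * 1 := by
        apply mul_lt_mul' (le_of_lt h1) h1 (abs_nonneg _) one_pos
    _ = 1 := one_mul 1
  -- selfadjointness
  have hsa : IsSelfAdjoint x0 := hx0
  have hsa2 : IsSelfAdjoint (x0 ^ 2) := hsa.pow 2
  have hx0sq : x0 ^ 2 = star x0 * x0 := by rw [hx0, sq]
  -- rewrite hs2 over ℝ
  have hs2' : c • x0 ^ 2 + x1 * star x1 = 1 := by
    rw [← hs2]
    congr 1
    rw [← algebraMap_smul ℂ c (x0 ^ 2)]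
    congr 1
    simp [hc_def]
  set T : Set ℝ := spectrum ℝ (x0 ^ 2) with hT_def
  have himg : Complex.ofReal '' T = spectrum ℂ (x0 ^ 2) := by
    have := hsa2.spectrumRestricts.algebraMap_image (R := ℝ) (S := ℂ)
    simpa using this
  -- T nonneg
  have hT0 : ∀ t ∈ T, 0 ≤ t := by
    rw [hT_def, hx0sq]
    exact spectrum_star_mul_self_nonneg
  -- spectrum of star x1 * x1
  have hA : spectrum ℝ (star x1 * x1) = ({1} : Set ℝ) - T := by
    have h1 : star x1 * x1 = algebraMap ℝ A 1 - x0 ^ 2 := by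
      rw [map_one]; exact eq_sub_of_add_eq' hs1
    rw [h1, ← spectrum.singleton_sub_eq]
  have hB : spectrum ℝ (x1 * star x1) = ({1} : Set ℝ) - c • T := by
    have h1 : x1 * star x1 = algebraMap ℝ A 1 - c • x0 ^ 2 := by
      rw [map_one]; exact eq_sub_of_add_eq' hs2'
    rw [h1, ← spectrum.singleton_sub_eq]
    congr 1
    have := spectrum.unit_smul_eq_smul (R := ℝ) (x0 ^ 2) (Units.mk0 c hc0.ne')
    simpa [Units.smul_def] using this
  have hswap := spectrum.nonzero_mul_comm (𝕜 := ℝ) (star x1) x1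
  -- T ≤ 1
  have hT1 : ∀ t ∈ T, t ≤ 1 := by
    intro t ht
    have h1 : (1 : ℝ) - t ∈ spectrum ℝ (star x1 * x1) := by
      rw [hA]; exact Set.sub_mem_sub rfl ht
    have := spectrum_star_mul_self_nonneg _ h1
    linarith
  -- key lemmas
  have key1 : ∀ t ∈ T, t ≠ 1 → ∃ s ∈ T, t = c * s := by
    intro t ht hne
    have h1 : (1 : ℝ) - t ∈ spectrum ℝ (star x1 * x1) \ {0} := by
      refine ⟨by rw [hA]; exact Set.sub_mem_sub rfl ht, ?_⟩
      simp only [Set.mem_singleton_iff, sub_eq_zero]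
      exact fun h => hne h.symm
    rw [hswap, hB] at h1
    obtain ⟨⟨u, hu, v, hv, huv⟩, -⟩ := h1
    rw [Set.mem_singleton_iff] at hu
    subst hu
    have hvt : v = t := by simp only at huv; linarith
    obtain ⟨s, hs, hcs⟩ := hv
    exact ⟨s, hs, by rw [← hvt, ← hcs]; simp⟩
  have key2 : ∀ s ∈ T, c * s ∈ T := by
    intro s hs
    have hcs1 : c * s < 1 := by
      have := hT1 s hs
      have hs0 := hT0 s hs
      nlinarith
    have h1 : (1 : ℝ) - c * s ∈ spectrum ℝ (x1 * star x1) \ {0} := by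
      refine ⟨by rw [hB]; exact Set.sub_mem_sub rfl ⟨s, hs, by simp⟩, ?_⟩
      simp only [Set.mem_singleton_iff, sub_eq_zero]
      intro h; linarith [h.symm]
    rw [← hswap, hA] at h1
    obtain ⟨⟨u, hu, v, hv, huv⟩, -⟩ := h1
    rw [Set.mem_singleton_iff] at hu
    subst hu
    have : v = c * s := by simp only at huv; linarith
    rwa [← this]
  -- T closed, compact, nonempty
  have hTclosed : IsClosed T := spectrum.isClosed _
  have hTcompact : IsCompact T :=
    (isCompact_Icc (a := (0:ℝ)) (b := 1)).of_isClosed_subset hTclosed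
      (fun t ht => ⟨hT0 t ht, hT1 t ht⟩)
  have hTne : T.Nonempty := by
    obtain ⟨z, hz⟩ := spectrum.nonempty (x0 ^ 2)
    rw [← himg] at hz
    obtain ⟨t, ht, -⟩ := hz
    exact ⟨t, ht⟩
  -- there is a nonzero element of T
  have hTnz : ∃ t ∈ T, 0 < t := by
    by_contra h
    push_neg at h
    have hTsub : T ⊆ {0} := by
      intro t ht
      have := h t ht
      have := hT0 t ht
      simp only [Set.mem_singleton_iff]
      linarith
    have hTeq : T = {0} := hTne.subset_singleton_iff.mp hTsub
    have hspec : spectrum ℂ (x0 ^ 2) = {0} := by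
      rw [← himg, hTeq]; simp
    have hrad : spectralRadius ℂ (x0 ^ 2) = 0 := by
      rw [spectralRadius, hspec]; simp
    have := hsa2.spectralRadius_eq_nnnorm
    rw [hrad] at this
    have hnz : ‖x0 ^ 2‖ = 0 := by
      have := this.symm
      simpa using congrArg ENNReal.toReal this
    have : x0 ^ 2 = 0 := norm_eq_zero.mp hnz
    rw [hx0sq] at this
    have : ‖x0‖ * ‖x0‖ = 0 := by
      rw [← CStarRing.norm_star_mul_self, this, norm_zero]
    have : ‖x0‖ = 0 := by nlinarith [norm_nonneg x0]
    exact hx00 (norm_eq_zero.mp this)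
  -- 1 ∈ T
  have h1T : (1 : ℝ) ∈ T := by
    have hm := hTcompact.sSup_mem hTne
    set m := sSup T with hm_def
    obtain ⟨t₀, ht₀, ht₀pos⟩ := hTnz
    have hm_pos : 0 < m := lt_of_lt_of_le ht₀pos (le_csSup hTcompact.bddAbove ht₀)
    by_cases hm1 : m = 1
    · rwa [← hm1]
    obtain ⟨s, hs, hms⟩ := key1 m hm hm1
    have hsm : s ≤ m := le_csSup hTcompact.bddAbove hs
    nlinarith
  -- c^k ∈ T
  have hck : ∀ k : ℕ, c ^ k ∈ T := by
    intro k
    induction k with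
    | zero => simpa using h1T
    | succ n ih => simpa [pow_succ, mul_comm] using key2 _ ih
  -- 0 ∈ T
  have h0T : (0 : ℝ) ∈ T := by
    have hlim : Filter.Tendsto (fun k : ℕ => c ^ k) Filter.atTop (nhds 0) :=
      tendsto_pow_atTop_nhds_zero_of_lt_one hc0.le hc1
    exact hTclosed.mem_of_tendsto hlim (Filter.Eventually.of_forall hck)
  -- converse: every element of T is 0 or c^k
  have hTsub : ∀ t ∈ T, t = 0 ∨ ∃ k : ℕ, t = c ^ k := by
    intro t ht
    by_contra h
    push_neg at h
    obtain ⟨ht0, hnk⟩ := h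
    have htpos : 0 < t := lt_of_le_of_ne (hT0 t ht) (Ne.symm ht0)
    have hdiv : ∀ k : ℕ, t / c ^ k ∈ T := by
      intro k
      induction k with
      | zero => simpa using ht
      | succ n ih =>
        have hne : t / c ^ n ≠ 1 := by
          intro h
          exact hnk n (by field_simp at h; linarith)
        obtain ⟨s, hs, hts⟩ := key1 _ ih hne
        have : s = t / c ^ (n + 1) := by
          rw [pow_succ]
          field_simp at hts ⊢
          linarith
        rwa [← this]
    -- contradiction: pick k with c^k < t
    have hlim : Filter.Tendsto (fun k : ℕ => c ^ k) Filter.atTop (nhds 0) :=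
      tendsto_pow_atTop_nhds_zero_of_lt_one hc0.le hc1
    obtain ⟨k, hk⟩ := (hlim.eventually (eventually_lt_nhds htpos)).exists
    have := hT1 _ (hdiv k)
    have hckpos : (0:ℝ) < c ^ k := pow_pos hc0 k
    rw [div_le_one hckpos] at this
    linarith
  -- conclude T = {0} ∪ range (c ^ ·)
  have hTeq : T = {0} ∪ Set.range (fun k : ℕ => c ^ k) := by
    apply Set.eq_of_subset_of_subset
    · intro t ht
      rcases hTsub t ht with h | ⟨k, hk⟩
      · exact Or.inl h
      · exact Or.inr ⟨k, hk.symm⟩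
    · rintro t (h | ⟨k, rfl⟩)
      · rw [Set.mem_singleton_iff.mp h]; exact h0T
      · exact hck k
  -- transfer to ℂ
  have hptk : ∀ k : ℕ, ((c ^ k : ℝ) : ℂ) = (q : ℂ) ^ (-(2 * (k : ℤ))) := by
    intro k
    have h2 : (-(2 * (k : ℤ))) = -((2 * k : ℕ) : ℤ) := by push_cast; ring
    rw [h2, zpow_neg, zpow_natCast, hc_def]
    push_cast
    rw [pow_mul]
    rw [inv_pow]
    exact inv_pow ((q:ℂ)^2) k
  rw [← himg, hTeq, Set.image_union, Set.image_singleton, Complex.ofReal_zero,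
    ← Set.range_comp]
  have hfeq : (Complex.ofReal ∘ fun k : ℕ => c ^ k)
      = fun k : ℕ => (q : ℂ) ^ (-(2 * (k : ℤ))) :=
    funext fun k => hptk k
  rw [hfeq]
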